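/- Let B⁰, B¹, B², B³ ∈ Λ²V be 2-forms and let e⁰ ∈ V be arbitrary. Then the following are equivalent: (a) B^I = 0 for every I ∈ {0,1,2,3}; (b) e^I∧B^J − e^J∧B^I = 0 in Λ³V for all I, J ∈ {0,1,2,3}, and e^i∧B^j + e^j∧B^i = 0 for all i, j ∈ {1,2,3}. (This is the paper's Proposition: the constraints 𝖣^{(ij)} = 0 and e^{[I}∧De^{J]} = 0 are jointly equivalent to De^I = 0, with B^I playing the role of the torsion 2-forms De^I.) -/

import Mathlib

open ExteriorAlgebra

section Aux

variable {V : Type*} [AddCommGroup V] [Module ℝ V]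

private lemma triple_ne_zero (b : Module.Basis (Fin 3) ℝ V) :
    ι ℝ (b 0) * ι ℝ (b 1) * ι ℝ (b 2) ≠ 0 := by
  intro h
  have hm : ιMulti ℝ 3 (⇑b) = ι ℝ (b 0) * ι ℝ (b 1) * ι ℝ (b 2) := by
    simp [ιMulti_apply, List.ofFn_succ, mul_assoc, Matrix.vecTail, Function.comp]
  set f : ∀ i, V [⋀^Fin i]→ₗ[ℝ] ℝ := Function.update (fun _ => 0) 3 b.det with hf
  have := liftAlternating_apply_ιMulti f (⇑b)
  rw [hm, h, map_zero] at this
  have h3 : f 3 = b.det := by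
    rw [hf]
    simp
  rw [h3, Module.Basis.det_self] at this
  exact one_ne_zero this.symm

private lemma repr2 (b : Module.Basis (Fin 3) ℝ V) (x : ExteriorAlgebra ℝ V)
    (hx : x ∈ (LinearMap.range (ι ℝ : V →ₗ[ℝ] ExteriorAlgebra ℝ V) ^ 2 :
        Submodule ℝ (ExteriorAlgebra ℝ V))) :
    ∃ a c d : ℝ, x = a • (ι ℝ (b 0) * ι ℝ (b 1)) + c • (ι ℝ (b 0) * ι ℝ (b 2))
      + d • (ι ℝ (b 1) * ι ℝ (b 2)) := by
  rw [pow_two] at hx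
  refine Submodule.mul_induction_on hx ?_ ?_
  · rintro _ ⟨u, rfl⟩ _ ⟨v, rfl⟩
    have hu : u = b.repr u 0 • b 0 + b.repr u 1 • b 1 + b.repr u 2 • b 2 := by
      have := b.sum_repr u
      rw [Fin.sum_univ_three] at this
      exact this.symm
    have hv : v = b.repr v 0 • b 0 + b.repr v 1 • b 1 + b.repr v 2 • b 2 := by
      have := b.sum_repr v
      rw [Fin.sum_univ_three] at this
      exact this.symm
    refine ⟨b.repr u 0 * b.repr v 1 - b.repr u 1 * b.repr v 0,
      b.repr u 0 * b.repr v 2 - b.repr u 2 * b.repr v 0,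
      b.repr u 1 * b.repr v 2 - b.repr u 2 * b.repr v 1, ?_⟩
    have s10 : ι ℝ (b 1) * ι ℝ (b 0) = -(ι ℝ (b 0) * ι ℝ (b 1)) :=
      eq_neg_of_add_eq_zero_left (ι_add_mul_swap (b 1) (b 0))
    have s20 : ι ℝ (b 2) * ι ℝ (b 0) = -(ι ℝ (b 0) * ι ℝ (b 2)) :=
      eq_neg_of_add_eq_zero_left (ι_add_mul_swap (b 2) (b 0))
    have s21 : ι ℝ (b 2) * ι ℝ (b 1) = -(ι ℝ (b 1) * ι ℝ (b 2)) :=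
      eq_neg_of_add_eq_zero_left (ι_add_mul_swap (b 2) (b 1))
    have z0 := ι_sq_zero (R := ℝ) (b 0)
    have z1 := ι_sq_zero (R := ℝ) (b 1)
    have z2 := ι_sq_zero (R := ℝ) (b 2)
    conv_lhs => rw [hu, hv]
    simp only [map_add, map_smul, add_mul, mul_add, smul_mul_assoc, mul_smul_comm,
      s10, s20, s21, z0, z1, z2]
    module
  · rintro x y ⟨a, c, d, rfl⟩ ⟨a', c', d', rfl⟩
    exact ⟨a + a', c + c', d + d', by module⟩

private lemma key (b : Module.Basis (Fin 3) ℝ V) (x : ExteriorAlgebra ℝ V)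
    (hx : x ∈ (LinearMap.range (ι ℝ : V →ₗ[ℝ] ExteriorAlgebra ℝ V) ^ 2 :
        Submodule ℝ (ExteriorAlgebra ℝ V)))
    (h : ∀ i : Fin 3, ι ℝ (b i) * x = 0) : x = 0 := by
  obtain ⟨a, c, d, rfl⟩ := repr2 b x hx
  have s10 : ι ℝ (b 1) * ι ℝ (b 0) = -(ι ℝ (b 0) * ι ℝ (b 1)) :=
    eq_neg_of_add_eq_zero_left (ι_add_mul_swap (b 1) (b 0))
  have s20 : ι ℝ (b 2) * ι ℝ (b 0) = -(ι ℝ (b 0) * ι ℝ (b 2)) :=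
    eq_neg_of_add_eq_zero_left (ι_add_mul_swap (b 2) (b 0))
  have s21 : ι ℝ (b 2) * ι ℝ (b 1) = -(ι ℝ (b 1) * ι ℝ (b 2)) :=
    eq_neg_of_add_eq_zero_left (ι_add_mul_swap (b 2) (b 1))
  have z0 := ι_sq_zero (R := ℝ) (b 0)
  have z1 := ι_sq_zero (R := ℝ) (b 1)
  have z2 := ι_sq_zero (R := ℝ) (b 2)
  have hw := triple_ne_zero b
  set w := ι ℝ (b 0) * ι ℝ (b 1) * ι ℝ (b 2) with hwdef
  have h0 := h 0
  have h1 := h 1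
  have h2 := h 2
  have e0 : ι ℝ (b 0) * (a • (ι ℝ (b 0) * ι ℝ (b 1)) + c • (ι ℝ (b 0) * ι ℝ (b 2))
      + d • (ι ℝ (b 1) * ι ℝ (b 2))) = d • w := by
    have t01 : ι ℝ (b 0) * (ι ℝ (b 0) * ι ℝ (b 1)) = 0 := by
      rw [← mul_assoc, z0, zero_mul]
    have t02 : ι ℝ (b 0) * (ι ℝ (b 0) * ι ℝ (b 2)) = 0 := by
      rw [← mul_assoc, z0, zero_mul]
    have t12 : ι ℝ (b 0) * (ι ℝ (b 1) * ι ℝ (b 2)) = w := by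
      rw [← mul_assoc, hwdef]
    simp only [mul_add, mul_smul_comm, t01, t02, t12, smul_zero, zero_add]
  have e1 : ι ℝ (b 1) * (a • (ι ℝ (b 0) * ι ℝ (b 1)) + c • (ι ℝ (b 0) * ι ℝ (b 2))
      + d • (ι ℝ (b 1) * ι ℝ (b 2))) = (-c) • w := by
    have t01 : ι ℝ (b 1) * (ι ℝ (b 0) * ι ℝ (b 1)) = 0 := by
      rw [← mul_assoc, s10, neg_mul, mul_assoc, z1, mul_zero, neg_zero]
    have t02 : ι ℝ (b 1) * (ι ℝ (b 0) * ι ℝ (b 2)) = -w := by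
      rw [← mul_assoc, s10, neg_mul, mul_assoc, ← mul_assoc, hwdef]
    have t12 : ι ℝ (b 1) * (ι ℝ (b 1) * ι ℝ (b 2)) = 0 := by
      rw [← mul_assoc, z1, zero_mul]
    simp only [mul_add, mul_smul_comm, t01, t02, t12, smul_zero, smul_neg, zero_add, add_zero,
      neg_smul]
  have e2 : ι ℝ (b 2) * (a • (ι ℝ (b 0) * ι ℝ (b 1)) + c • (ι ℝ (b 0) * ι ℝ (b 2))
      + d • (ι ℝ (b 1) * ι ℝ (b 2))) = a • w := by
    have t01 : ι ℝ (b 2) * (ι ℝ (b 0) * ι ℝ (b 1)) = w := by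
      rw [← mul_assoc, s20, neg_mul, mul_assoc, s21, mul_neg, neg_neg, ← mul_assoc, hwdef]
    have t02 : ι ℝ (b 2) * (ι ℝ (b 0) * ι ℝ (b 2)) = 0 := by
      rw [← mul_assoc, s20, neg_mul, mul_assoc, z2, mul_zero, neg_zero]
    have t12 : ι ℝ (b 2) * (ι ℝ (b 1) * ι ℝ (b 2)) = 0 := by
      rw [← mul_assoc, s21, neg_mul, mul_assoc, z2, mul_zero, neg_zero]
    simp only [mul_add, mul_smul_comm, t01, t02, t12, smul_zero, add_zero]
  rw [e0] at h0; rw [e1] at h1; rw [e2] at h2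
  have hd : d = 0 := by
    rcases smul_eq_zero.mp h0 with h | h
    · exact h
    · exact absurd h hw
  have hc : c = 0 := by
    rcases smul_eq_zero.mp h1 with h | h
    · exact neg_eq_zero.mp h
    · exact absurd h hw
  have ha : a = 0 := by
    rcases smul_eq_zero.mp h2 with h | h
    · exact h
    · exact absurd h hw
  rw [ha, hc, hd]
  simp

end Aux

/-- for 2-forms `B⁰,…,B³ ∈ Λ²V` over a 3-dimensional real vector space `V`
with basis `(e¹,e²,e³)` and an arbitrary `e⁰ ∈ V`, the following are equivalent:
(a) `B^I = 0` for all `I`;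
(b) `e^I∧B^J − e^J∧B^I = 0` for all `I,J ∈ {0,1,2,3}` and `e^i∧B^j + e^j∧B^i = 0`
for all spatial `i,j ∈ {1,2,3}`. -/
theorem stmt_0 (V : Type*) [AddCommGroup V] [Module ℝ V] (b : Module.Basis (Fin 3) ℝ V) (e0 : V)
    (B : Fin 4 → ExteriorAlgebra ℝ V)
    (hB : ∀ I : Fin 4, B I ∈
      (LinearMap.range (ExteriorAlgebra.ι ℝ : V →ₗ[ℝ] ExteriorAlgebra ℝ V) ^ 2 :
        Submodule ℝ (ExteriorAlgebra ℝ V))) :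
    (∀ I : Fin 4, B I = 0) ↔
      ((∀ I J : Fin 4,
          ExteriorAlgebra.ι ℝ ((Fin.cons e0 fun i => b i : Fin 4 → V) I) * B J -
            ExteriorAlgebra.ι ℝ ((Fin.cons e0 fun i => b i : Fin 4 → V) J) * B I = 0) ∧
        (∀ i j : Fin 3,
          ExteriorAlgebra.ι ℝ (b i) * B j.succ + ExteriorAlgebra.ι ℝ (b j) * B i.succ = 0)) := by
  constructor
  · intro h
    constructor <;> intros <;> simp [h]
  · rintro ⟨h1, h2⟩
    have hspat : ∀ i j : Fin 3, ι ℝ (b i) * B j.succ = 0 := by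
      intro i j
      have ha := h1 i.succ j.succ
      rw [Fin.cons_succ, Fin.cons_succ, sub_eq_zero] at ha
      have hb2 := h2 i j
      rw [← ha] at hb2
      have h2s : (2 : ℝ) • (ι ℝ (b i) * B j.succ) = 0 := by
        rw [two_smul]; exact hb2
      rcases smul_eq_zero.mp h2s with h | h
      · norm_num at h
      · exact h
    have hsp : ∀ j : Fin 3, B j.succ = 0 := fun j => key b _ (hB j.succ) (fun i => hspat i j)
    have hB0 : B 0 = 0 := by
      refine key b _ (hB 0) (fun i => ?_)
      have := h1 i.succ 0
      rw [Fin.cons_succ, Fin.cons_zero, hsp i, mul_zero, sub_zero] at this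
      exact this
    intro I
    induction I using Fin.cases with
    | zero => exact hB0
    | succ j => exact hsp j
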